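/- Suppose the dataset satisfies: x_iᵀx_j > 0 whenever y_i = y_j, and x_iᵀx_j < 0 whenever y_i ≠ y_j. Consider one SGD step w_{t+1} = w_t + η exp(-y_ξ w_tᵀx_ξ) y_ξ x_ξ for some selected index ξ with activated sample (w_tᵀx_ξ > 0). Then for every sample j: if y_j = +1 then w_{t+1}ᵀx_j > w_tᵀx_j, and if y_j = -1 then w_{t+1}ᵀx_j < w_tᵀx_j. In particular, any sample correctly classified at step t (y_j w_tᵀx_j > 0) remains correctly classified at step t+1. -/

import Mathlib

open Filter Finset Real

/-- under the pairwise sign conditions on inner products, one SGD step on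
an activated sample strictly increases `wᵀx_j` for positive samples and strictly
decreases it for negative samples; hence correctly classified samples stay correct. -/
theorem sgd_step_monotone_margins
    {d n : ℕ}
    (x : Fin n → EuclideanSpace ℝ (Fin d)) (y : Fin n → ℝ)
    (hy : ∀ i, y i = 1 ∨ y i = -1)
    (hsame : ∀ i j, y i = y j → 0 < (inner ℝ (x i) (x j) : ℝ))
    (hdiff : ∀ i j, y i ≠ y j → (inner ℝ (x i) (x j) : ℝ) < 0)
    (η : ℝ) (hη : 0 < η)
    (wt wnext : EuclideanSpace ℝ (Fin d)) (ξ : Fin n)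
    (hact : 0 < (inner ℝ wt (x ξ) : ℝ))
    (hupd : wnext = wt + (η * Real.exp (-(y ξ) * (inner ℝ wt (x ξ) : ℝ)) * y ξ) • x ξ) :
    (∀ j, y j = 1 → (inner ℝ wt (x j) : ℝ) < (inner ℝ wnext (x j) : ℝ)) ∧
    (∀ j, y j = -1 → (inner ℝ wnext (x j) : ℝ) < (inner ℝ wt (x j) : ℝ)) ∧
    (∀ j, 0 < y j * (inner ℝ wt (x j) : ℝ) → 0 < y j * (inner ℝ wnext (x j) : ℝ)) := by
  set c : ℝ := η * Real.exp (-(y ξ) * (inner ℝ wt (x ξ) : ℝ)) with hc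
  have hcpos : 0 < c := mul_pos hη (Real.exp_pos _)
  have hinner : ∀ j, (inner ℝ wnext (x j) : ℝ) =
      (inner ℝ wt (x j) : ℝ) + c * (y ξ * (inner ℝ (x ξ) (x j) : ℝ)) := by
    intro j
    rw [hupd, inner_add_left, real_inner_smul_left]
    ring
  have hkey : ∀ j, y j = 1 → 0 < y ξ * (inner ℝ (x ξ) (x j) : ℝ) := by
    intro j hj
    rcases hy ξ with hξ | hξ
    · have := hsame ξ j (by rw [hξ, hj])
      rw [hξ]; linarith
    · have := hdiff ξ j (by rw [hξ, hj]; norm_num)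
      rw [hξ]; linarith
  have hkey' : ∀ j, y j = -1 → y ξ * (inner ℝ (x ξ) (x j) : ℝ) < 0 := by
    intro j hj
    rcases hy ξ with hξ | hξ
    · have := hdiff ξ j (by rw [hξ, hj]; norm_num)
      rw [hξ]; linarith
    · have := hsame ξ j (by rw [hξ, hj])
      rw [hξ]; linarith
  refine ⟨?_, ?_, ?_⟩
  · intro j hj
    have := hkey j hj
    rw [hinner j]; nlinarith
  · intro j hj
    have := hkey' j hj
    rw [hinner j]; nlinarith
  · intro j hcorr
    rcases hy j with hj | hj
    · have h1 := hkey j hj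
      rw [hj] at hcorr
      rw [hinner j, hj]
      nlinarith [mul_pos hcpos h1]
    · have h1 := hkey' j hj
      rw [hj] at hcorr
      rw [hinner j, hj]
      nlinarith [mul_pos hcpos (neg_pos.mpr h1)]
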